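/- For the star K_{1,k} (one center adjacent to k leaves), the limit lim_{n→∞} sat(K_{1,k}, n)/n exists and equals (k−1)/2. -/

import Mathlib

open SimpleGraph

/-- `H` has a copy in `G`: an injective graph homomorphism (i.e. a subgraph isomorphic to `H`). -/
def hasCopy {α β : Type*} (H : SimpleGraph α) (G : SimpleGraph β) : Prop :=
  ∃ f : H →g G, Function.Injective f

/-- `G` is `H`-saturated: `H`-free, and adding any missing edge creates a copy of `H`. -/
def isSat {α β : Type*} (H : SimpleGraph α) (G : SimpleGraph β) : Prop :=
  ¬ hasCopy H G ∧ ∀ x y : β, x ≠ y → ¬ G.Adj x y →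
    hasCopy H (G ⊔ SimpleGraph.fromEdgeSet {s(x, y)})

/-- The weight of an edge `uv`: with `deg u ≤ deg v`,
`wt(uv) = 2|N(u) ∩ N(v)| + |N(v) \ N(u)|`. -/
noncomputable def edgeWt {α : Type*} (H : SimpleGraph α) (u v : α) : ℕ :=
  if (H.neighborSet u).ncard ≤ (H.neighborSet v).ncard then
    2 * (H.neighborSet u ∩ H.neighborSet v).ncard + ((H.neighborSet v) \ (H.neighborSet u)).ncard
  else
    2 * (H.neighborSet u ∩ H.neighborSet v).ncard + ((H.neighborSet u) \ (H.neighborSet v)).ncard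

/-- The weight of a graph: the minimum weight of an edge. -/
noncomputable def graphWt {α : Type*} (H : SimpleGraph α) : ℕ :=
  sInf {w | ∃ u v, H.Adj u v ∧ w = edgeWt H u v}

/-- The saturation number: minimum number of edges of an `H`-saturated graph on `n` vertices. -/
noncomputable def satNum {α : Type*} (H : SimpleGraph α) (n : ℕ) : ℕ :=
  sInf {m | ∃ G : SimpleGraph (Fin n), isSat H G ∧ Nat.card G.edgeSet = m}

/-- The graph obtained from `H` by adding a dominating vertex (`none`). -/
def addDom {α : Type*} (H : SimpleGraph α) : SimpleGraph (Option α) :=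
  SimpleGraph.fromRel (fun x y => x = none ∨ ∃ u v, x = some u ∧ y = some v ∧ H.Adj u v)


attribute [local instance] Classical.propDecidable

lemma addDom_bot_adj {k : ℕ} (x y : Option (Fin k)) :
    (addDom (⊥ : SimpleGraph (Fin k))).Adj x y ↔ x ≠ y ∧ (x = none ∨ y = none) := by
  simp [addDom, SimpleGraph.fromRel_adj]

lemma hasCopy_star_iff {n k : ℕ} (G : SimpleGraph (Fin n)) :
    hasCopy (addDom (⊥ : SimpleGraph (Fin k))) G ↔ ∃ v, k ≤ (G.neighborSet v).ncard := by
  constructor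
  · rintro ⟨f, hf⟩
    refine ⟨f none, ?_⟩
    have hmem : ∀ i : Fin k, f (some i) ∈ G.neighborFinset (f none) := by
      intro i
      rw [SimpleGraph.mem_neighborFinset]
      exact f.map_rel ((addDom_bot_adj (none) (some i)).2 ⟨by simp, Or.inl rfl⟩)
    rw [Set.ncard_eq_toFinset_card']
    calc k = (Finset.univ : Finset (Fin k)).card := by simp
    _ ≤ (G.neighborFinset (f none)).card :=
        Finset.card_le_card_of_injOn (fun i => f (some i)) (fun i _ => hmem i)
          (fun a _ b _ h => by have := hf h; simpa using this)
    _ = (G.neighborSet (f none)).toFinset.card := rfl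
  · rintro ⟨v, hv⟩
    have hcard : Fintype.card (Fin k) ≤ Fintype.card (G.neighborSet v) := by
      rw [← Nat.card_coe_set_eq, Nat.card_eq_fintype_card] at hv
      simpa using hv
    obtain ⟨g⟩ := Function.Embedding.nonempty_of_card_le hcard
    have hadj : ∀ i : Fin k, G.Adj v (g i) := fun i => (g i).2
    refine ⟨⟨fun x => x.elim v (fun i => (g i : Fin n)), ?_⟩, ?_⟩
    · intro a b hab
      rw [addDom_bot_adj] at hab
      obtain ⟨hne, h | h⟩ := hab
      · subst h
        match b with
        | none => exact absurd rfl hne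
        | some i => exact hadj i
      · subst h
        match a with
        | none => exact absurd rfl hne
        | some i => exact (hadj i).symm
    · intro a b hab
      match a, b with
      | none, none => rfl
      | none, some i =>
        exact absurd (hab : v = (g i : Fin n)) (G.ne_of_adj (hadj i))
      | some i, none =>
        exact absurd ((hab : (g i : Fin n) = v)).symm (G.ne_of_adj (hadj i))
      | some i, some j =>
        have hij : (g i : Fin n) = (g j : Fin n) := hab
        exact congrArg some (g.injective (Subtype.ext hij))

lemma sup_edge_nbrSet_ne {n : ℕ} (G : SimpleGraph (Fin n)) {x y v : Fin n}
    (hvx : v ≠ x) (hvy : v ≠ y) :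
    (G ⊔ SimpleGraph.fromEdgeSet {s(x, y)}).neighborSet v = G.neighborSet v := by
  ext w
  simp only [SimpleGraph.mem_neighborSet, SimpleGraph.sup_adj,
    SimpleGraph.fromEdgeSet_adj, Set.mem_singleton_iff, Sym2.eq_iff]
  constructor
  · rintro (h | ⟨(⟨h1, h2⟩ | ⟨h1, h2⟩), hne⟩)
    · exact h
    · exact absurd h1 hvx
    · exact absurd h1 hvy
  · exact fun h => Or.inl h

lemma sup_edge_nbrSet_left {n : ℕ} (G : SimpleGraph (Fin n)) {x y : Fin n} :
    (G ⊔ SimpleGraph.fromEdgeSet {s(x, y)}).neighborSet x ⊆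
      insert y (G.neighborSet x) := by
  intro w hw
  simp only [SimpleGraph.mem_neighborSet, SimpleGraph.sup_adj,
    SimpleGraph.fromEdgeSet_adj, Set.mem_singleton_iff, Sym2.eq_iff] at hw
  rcases hw with h | ⟨(⟨h1, h2⟩ | ⟨h1, h2⟩), hne⟩
  · exact Set.mem_insert_of_mem _ h
  · rw [h2]; exact Set.mem_insert _ _
  · exact absurd h2.symm hne

lemma isSat_star_degrees {n k : ℕ} {G : SimpleGraph (Fin n)}
    (h : isSat (addDom (⊥ : SimpleGraph (Fin k))) G) :
    (∀ v, (G.neighborSet v).ncard < k) ∧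
      ∀ x y : Fin n, x ≠ y → ¬ G.Adj x y →
        k ≤ (G.neighborSet x).ncard + 1 ∨ k ≤ (G.neighborSet y).ncard + 1 := by
  have hfree : ∀ v, (G.neighborSet v).ncard < k := by
    intro v
    by_contra hc
    exact h.1 ((hasCopy_star_iff G).2 ⟨v, le_of_not_gt hc⟩)
  refine ⟨hfree, fun x y hxy hnadj => ?_⟩
  obtain ⟨v, hv⟩ := (hasCopy_star_iff _).1 (h.2 x y hxy hnadj)
  by_cases hvx : v = x
  · subst hvx
    left
    calc k ≤ ((G ⊔ SimpleGraph.fromEdgeSet {s(v, y)}).neighborSet v).ncard := hv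
    _ ≤ (insert y (G.neighborSet v)).ncard :=
        Set.ncard_le_ncard (sup_edge_nbrSet_left G) (Set.toFinite _)
    _ ≤ (G.neighborSet v).ncard + 1 := Set.ncard_insert_le _ _
  · by_cases hvy : v = y
    · subst hvy
      right
      have hsub : (G ⊔ SimpleGraph.fromEdgeSet {s(x, v)}).neighborSet v ⊆
          insert x (G.neighborSet v) := by
        have h2 : s(x, v) = s(v, x) := Sym2.eq_swap
        rw [h2]
        exact sup_edge_nbrSet_left G
      calc k ≤ ((G ⊔ SimpleGraph.fromEdgeSet {s(x, v)}).neighborSet v).ncard := hv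
      _ ≤ (insert x (G.neighborSet v)).ncard :=
          Set.ncard_le_ncard hsub (Set.toFinite _)
      _ ≤ (G.neighborSet v).ncard + 1 := Set.ncard_insert_le _ _
    · exfalso
      rw [sup_edge_nbrSet_ne G hvx hvy] at hv
      exact absurd hv (not_le.2 (hfree v))

lemma degree_eq_ncard {n : ℕ} (G : SimpleGraph (Fin n)) (v : Fin n) :
    G.degree v = (G.neighborSet v).ncard := (Set.ncard_eq_toFinset_card' _).symm

lemma twice_card_edges {n : ℕ} (G : SimpleGraph (Fin n)) :
    2 * Nat.card G.edgeSet = ∑ v : Fin n, G.degree v := by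
  rw [Nat.card_coe_set_eq, Set.ncard_eq_toFinset_card',
    SimpleGraph.sum_degrees_eq_twice_card_edges]
  convert rfl
  ext e
  simp

lemma sat_bounds {n k : ℕ} (hk : 1 ≤ k) {G : SimpleGraph (Fin n)}
    (h : isSat (addDom (⊥ : SimpleGraph (Fin k))) G) :
    (n - k) * (k - 1) ≤ 2 * Nat.card G.edgeSet ∧
      2 * Nat.card G.edgeSet ≤ n * (k - 1) := by
  obtain ⟨hfree, hsat⟩ := isSat_star_degrees h
  have hfree' : ∀ v, G.degree v < k := fun v => by
    rw [degree_eq_ncard]; exact hfree v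
  rw [twice_card_edges]
  constructor
  · -- lower bound
    set S : Finset (Fin n) := Finset.univ.filter (fun v => G.degree v + 1 < k) with hS
    have hSk : S.card ≤ k - 1 := by
      rcases Finset.eq_empty_or_nonempty S with he | ⟨v, hv⟩
      · rw [he, Finset.card_empty]; exact Nat.zero_le _
      · have hvS : G.degree v + 1 < k := (Finset.mem_filter.1 hv).2
        have hsub : S.erase v ⊆ G.neighborFinset v := by
          intro w hw
          have hwv : w ≠ v := Finset.ne_of_mem_erase hw
          have hwS : G.degree w + 1 < k :=
            (Finset.mem_filter.1 (Finset.mem_of_mem_erase hw)).2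
          rw [SimpleGraph.mem_neighborFinset]
          by_contra hna
          have hdv := degree_eq_ncard G v
          have hdw := degree_eq_ncard G w
          rcases hsat v w (Ne.symm hwv) hna with h1 | h1 <;> omega
        have hcard := Finset.card_le_card hsub
        rw [Finset.card_erase_of_mem hv] at hcard
        have hdeg : (G.neighborFinset v).card = G.degree v := rfl
        omega
    have hout : ∀ v ∈ Sᶜ, k - 1 ≤ G.degree v := by
      intro v hv
      have hnv : ¬ (G.degree v + 1 < k) := by
        simpa [hS] using (Finset.mem_compl.1 hv)
      omega
    calc (n - k) * (k - 1) ≤ Sᶜ.card * (k - 1) := by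
          apply Nat.mul_le_mul_right
          rw [Finset.card_compl]
          simp only [Fintype.card_fin]
          omega
    _ = ∑ _v ∈ Sᶜ, (k - 1) := by rw [Finset.sum_const, smul_eq_mul]
    _ ≤ ∑ v ∈ Sᶜ, G.degree v := Finset.sum_le_sum hout
    _ ≤ ∑ v : Fin n, G.degree v :=
        Finset.sum_le_sum_of_subset (Finset.subset_univ _)
  · calc ∑ v : Fin n, G.degree v ≤ ∑ _v : Fin n, (k - 1) :=
        Finset.sum_le_sum (fun v _ => by have := hfree' v; omega)
    _ = n * (k - 1) := by simp [Finset.sum_const, mul_comm]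

lemma exists_sat (k : ℕ) (hk : 1 ≤ k) (n : ℕ) :
    ∃ G : SimpleGraph (Fin n), isSat (addDom (⊥ : SimpleGraph (Fin k))) G := by
  set F : Set (SimpleGraph (Fin n)) :=
    {G | ¬ hasCopy (addDom (⊥ : SimpleGraph (Fin k))) G} with hF
  have hbot : (⊥ : SimpleGraph (Fin n)) ∈ F := by
    rw [hF, Set.mem_setOf_eq, hasCopy_star_iff]
    push_neg
    intro v
    have hb : (⊥ : SimpleGraph (Fin n)).neighborSet v = ∅ := rfl
    rw [hb, Set.ncard_empty]
    omega
  obtain ⟨G, hGF, hGmax⟩ := Set.Finite.exists_maximalFor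
    (fun G => Nat.card G.edgeSet) F (Set.toFinite F) ⟨_, hbot⟩
  refine ⟨G, hGF, ?_⟩
  intro x y hxy hnadj
  by_contra hc
  have hG'F : G ⊔ SimpleGraph.fromEdgeSet {s(x, y)} ∈ F := hc
  have hcard : Nat.card (G ⊔ SimpleGraph.fromEdgeSet {s(x, y)}).edgeSet
      = Nat.card G.edgeSet + 1 := by
    have hdiag : ¬ (s(x, y) : Sym2 (Fin n)).IsDiag := by simp [hxy]
    have hsd : ({s(x, y)} : Set (Sym2 (Fin n))) \ {e | e.IsDiag} = {s(x, y)} := by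
      ext e
      simp only [Set.mem_diff, Set.mem_singleton_iff, Set.mem_setOf_eq]
      constructor
      · rintro ⟨h, _⟩; exact h
      · rintro rfl; exact ⟨rfl, hdiag⟩
    have hES : (G ⊔ SimpleGraph.fromEdgeSet {s(x, y)}).edgeSet
        = insert s(x, y) G.edgeSet := by
      rw [SimpleGraph.edgeSet_sup, SimpleGraph.edgeSet_fromEdgeSet, Sym2.diagSet_eq_setOfPred_isDiag, hsd,
        Set.union_comm]
      exact (Set.insert_eq _ _).symm
    rw [hES, Nat.card_coe_set_eq, Nat.card_coe_set_eq,
      Set.ncard_insert_of_notMem (fun hmem => hnadj (G.mem_edgeSet.1 hmem))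
        (Set.toFinite _)]
  have : Nat.card (G ⊔ SimpleGraph.fromEdgeSet {s(x, y)}).edgeSet ≤ Nat.card G.edgeSet :=
    hGmax hG'F (by beta_reduce; omega)
  omega

lemma satNum_bounds (k : ℕ) (hk : 1 ≤ k) (n : ℕ) :
    (n - k) * (k - 1) ≤ 2 * satNum (addDom (⊥ : SimpleGraph (Fin k))) n ∧
      2 * satNum (addDom (⊥ : SimpleGraph (Fin k))) n ≤ n * (k - 1) := by
  obtain ⟨G₀, hG₀⟩ := exists_sat k hk n
  have hne : {m | ∃ G : SimpleGraph (Fin n),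
      isSat (addDom (⊥ : SimpleGraph (Fin k))) G ∧ Nat.card G.edgeSet = m}.Nonempty :=
    ⟨_, G₀, hG₀, rfl⟩
  obtain ⟨G, hG, hGcard⟩ := Nat.sInf_mem hne
  rw [satNum, ← hGcard]
  exact sat_bounds hk hG


/-- For the star `K_{1,k}` (realized as the empty graph on `k` vertices plus a
dominating vertex), `sat(K_{1,k}, n)/n` tends to `(k-1)/2`. -/
theorem stmt11 (k : ℕ) (hk : 1 ≤ k) :
    Filter.Tendsto
      (fun n : ℕ => (satNum (addDom (⊥ : SimpleGraph (Fin k))) n : ℝ) / n)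
      Filter.atTop (nhds (((k : ℝ) - 1) / 2)) := by
  set a : ℕ → ℕ := fun n => satNum (addDom (⊥ : SimpleGraph (Fin k))) n with ha
  have hk1 : ((k : ℝ) - 1) ≥ 0 := by
    have : (1 : ℝ) ≤ k := by exact_mod_cast hk
    linarith
  -- lower auxiliary sequence
  have hL : Filter.Tendsto (fun n : ℕ => ((k : ℝ) - 1) / 2 * (1 - k / n))
      Filter.atTop (nhds (((k : ℝ) - 1) / 2)) := by
    have h0 : Filter.Tendsto (fun n : ℕ => (k : ℝ) / n) Filter.atTop (nhds 0) :=
      tendsto_const_div_atTop_nhds_zero_nat (k : ℝ)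
    have h1 : Filter.Tendsto (fun n : ℕ => 1 - (k : ℝ) / n) Filter.atTop (nhds (1 - 0)) :=
      (tendsto_const_nhds.sub h0)
    have h2 := h1.const_mul (((k : ℝ) - 1) / 2)
    simpa using h2
  have hupper : ∀ᶠ n : ℕ in Filter.atTop, (a n : ℝ) / n ≤ ((k : ℝ) - 1) / 2 := by
    filter_upwards [Filter.eventually_ge_atTop 1] with n hn
    have hb := (satNum_bounds k hk n).2
    have hcast : (2 : ℝ) * a n ≤ n * ((k : ℝ) - 1) := by
      have h1 : ((k - 1 : ℕ) : ℝ) = (k : ℝ) - 1 := by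
        push_cast [hk]; ring
      calc (2 : ℝ) * a n = ((2 * a n : ℕ) : ℝ) := by push_cast; ring
      _ ≤ ((n * (k - 1) : ℕ) : ℝ) := by exact_mod_cast hb
      _ = n * ((k : ℝ) - 1) := by rw [Nat.cast_mul, h1]
    have hn0 : (0 : ℝ) < n := by exact_mod_cast hn
    rw [div_le_div_iff₀ hn0 (by norm_num : (0:ℝ) < 2)]
    nlinarith
  have hlower : ∀ᶠ n : ℕ in Filter.atTop,
      ((k : ℝ) - 1) / 2 * (1 - k / n) ≤ (a n : ℝ) / n := by
    filter_upwards [Filter.eventually_ge_atTop (max 1 k)] with n hn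
    have hn1 : 1 ≤ n := le_trans (le_max_left 1 k) hn
    have hnk : k ≤ n := le_trans (le_max_right 1 k) hn
    have hb := (satNum_bounds k hk n).1
    have hcast : ((n : ℝ) - k) * ((k : ℝ) - 1) ≤ 2 * a n := by
      have h1 : ((k - 1 : ℕ) : ℝ) = (k : ℝ) - 1 := by push_cast [hk]; ring
      have h2 : ((n - k : ℕ) : ℝ) = (n : ℝ) - k := by push_cast [hnk]; ring
      calc ((n : ℝ) - k) * ((k : ℝ) - 1) = ((n - k : ℕ) : ℝ) * (((k - 1 : ℕ)) : ℝ) := by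
            rw [h1, h2]
      _ = (((n - k) * (k - 1) : ℕ) : ℝ) := by push_cast; ring
      _ ≤ ((2 * a n : ℕ) : ℝ) := by exact_mod_cast hb
      _ = 2 * a n := by push_cast; ring
    have hn0 : (0 : ℝ) < n := by exact_mod_cast hn1
    rw [le_div_iff₀ hn0]
    have hexp : ((k : ℝ) - 1) / 2 * (1 - k / n) * n = ((n : ℝ) - k) * ((k : ℝ) - 1) / 2 := by
      field_simp
    rw [hexp]
    linarith
  exact tendsto_of_tendsto_of_tendsto_of_le_of_le' hL tendsto_const_nhds hlower hupper
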